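/- Let 0 ≤ α < 1 and let G(z) = ((1-z)/(1+z))^{2(1-α)} for z in the unit disk, with Taylor expansion G(z) = 1 + Σ_{n≥1} d_n z^n. Then for |z| = r with r = (2^{1/(2(1-α))} - 1)/(2^{1/(2(1-α))} + 1), one has Σ_{n≥1} |d_n| r^n ≥ ((1+r)/(1-r))^{2(1-α)} - 1 = 1. -/

import Mathlib

theorem stmt_10 (α : ℝ) (h0 : 0 ≤ α) (h1 : α < 1) (d : ℕ → ℂ)
    (hd : ∀ z ∈ Metric.ball (0:ℂ) 1,
      (1 + ∑' n : ℕ, d (n+1) * z ^ (n+1)) = ((1 - z) / (1 + z)) ^ ((2:ℂ) * (1 - (α:ℂ))))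
    (r : ℝ)
    (hr : r = ((2:ℝ) ^ (1 / (2 * (1 - α))) - 1) / ((2:ℝ) ^ (1 / (2 * (1 - α))) + 1)) :
    (∑' n : ℕ, ‖d (n+1)‖ * r ^ (n+1)) ≥ ((1+r)/(1-r)) ^ (2*(1-α)) - 1 ∧
      ((1+r)/(1-r)) ^ (2*(1-α)) - 1 = 1 := by
  have hβ : 0 < 2 * (1 - α) := by nlinarith
  set t : ℝ := (2:ℝ) ^ (1 / (2 * (1 - α))) with ht_def
  have ht : 1 < t := Real.one_lt_rpow_iff_of_pos two_pos |>.mpr (Or.inl ⟨one_lt_two, by positivity⟩)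
  have hr0 : 0 < r := by rw [hr]; apply div_pos <;> linarith
  have hr1 : r < 1 := by rw [hr, div_lt_one (by linarith)]; linarith
  have key1 : (1 + r) / (1 - r) = t := by
    rw [hr]; field_simp; ring
  have key2 : ((1 + r) / (1 - r)) ^ (2 * (1 - α)) = 2 := by
    rw [key1, ht_def, ← Real.rpow_mul (by norm_num), one_div,
      inv_mul_cancel₀ hβ.ne', Real.rpow_one]
  refine ⟨?_, by rw [key2]; norm_num⟩
  rw [key2]
  -- apply hd at z = -r
  have hz : (-(r:ℂ)) ∈ Metric.ball (0:ℂ) 1 := by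
    simp [Complex.norm_real, abs_of_pos hr0, hr1]
  have hG := hd _ hz
  have hcast : ((1 - (-(r:ℂ))) / (1 + (-(r:ℂ)))) ^ ((2:ℂ) * (1 - (α:ℂ)))
      = ((((1 + r) / (1 - r)) ^ (2 * (1 - α)) : ℝ) : ℂ) := by
    have h1 : (1 - (-(r:ℂ))) / (1 + (-(r:ℂ))) = (((1 + r) / (1 - r) : ℝ) : ℂ) := by
      push_cast; ring
    rw [h1, Complex.ofReal_cpow (div_nonneg (by linarith) (by linarith))]
    push_cast; ring_nf
  rw [hcast, key2] at hG
  have hS : (∑' n : ℕ, d (n+1) * (-(r:ℂ)) ^ (n+1)) = 1 := by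
    have : (1:ℂ) + (∑' n : ℕ, d (n+1) * (-(r:ℂ)) ^ (n+1)) = 2 := by exact_mod_cast hG
    linear_combination this
  have hsum : Summable (fun n : ℕ => d (n+1) * (-(r:ℂ)) ^ (n+1)) := by
    by_contra h
    rw [tsum_eq_zero_of_not_summable h] at hS
    exact one_ne_zero hS.symm
  have hnorm : ∀ n : ℕ, ‖d (n+1) * (-(r:ℂ)) ^ (n+1)‖ = ‖d (n+1)‖ * r ^ (n+1) := by
    intro n
    rw [norm_mul, norm_pow]
    simp [Complex.norm_real, abs_of_pos hr0]
  have hsum' : Summable (fun n : ℕ => ‖d (n+1)‖ * r ^ (n+1)) := by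
    have := hsum.norm
    simpa [hnorm, abs_of_pos hr0] using this
  have hle : ‖∑' n : ℕ, d (n+1) * (-(r:ℂ)) ^ (n+1)‖
      ≤ ∑' n : ℕ, ‖d (n+1)‖ * r ^ (n+1) := by
    calc ‖∑' n : ℕ, d (n+1) * (-(r:ℂ)) ^ (n+1)‖
        ≤ ∑' n : ℕ, ‖d (n+1) * (-(r:ℂ)) ^ (n+1)‖ := norm_tsum_le_tsum_norm hsum.norm
      _ = ∑' n : ℕ, ‖d (n+1)‖ * r ^ (n+1) := by
          exact tsum_congr hnorm
  rw [hS] at hle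
  simp only [norm_one] at hle
  linarith
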